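/- Let φ, ψ : [0,∞) → ℂ be twice-differentiable with ψ(0) = φ(0) = 0, suppose -φ'' + Vφ + λ²φ = 0 and -ψ'' + Vψ + λ²ψ = c·φ on [0,∞) for some constant c ≠ 0, and suppose φ, φ', ψ, ψ' all tend to 0 at infinity fast enough that ψφ' - φψ' → 0 as x → ∞. Then ∫₀^∞ φ(x)² dx = 0. -/

import Mathlib

open Complex MeasureTheory Filter

theorem non_simple_eigenvalue_pairing_vanishes
    (V : ℝ → ℂ) (lam c : ℂ) (hc : c ≠ 0)
    (φ ψ : ℝ → ℂ)
    (hsφ : ∀ x : ℝ, DifferentiableAt ℝ φ x ∧ DifferentiableAt ℝ (deriv φ) x)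
    (hsψ : ∀ x : ℝ, DifferentiableAt ℝ ψ x ∧ DifferentiableAt ℝ (deriv ψ) x)
    (h0φ : φ 0 = 0) (h0ψ : ψ 0 = 0)
    (hodeφ : ∀ x : ℝ, 0 ≤ x →
      -(deriv (deriv φ) x) + V x * φ x + lam ^ 2 * φ x = 0)
    (hodeψ : ∀ x : ℝ, 0 ≤ x →
      -(deriv (deriv ψ) x) + V x * ψ x + lam ^ 2 * ψ x = c * φ x)
    (hint : IntegrableOn (fun x : ℝ => φ x ^ 2) (Set.Ioi 0))
    (hwron : Tendsto (fun x : ℝ => ψ x * deriv φ x - φ x * deriv ψ x) atTop (nhds 0)) :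
    ∫ x in Set.Ioi (0:ℝ), φ x ^ 2 = 0 := by
  set W : ℝ → ℂ := fun x => ψ x * deriv φ x - φ x * deriv ψ x with hW
  have hder : ∀ x ∈ Set.Ioi (0:ℝ), HasDerivAt W (c * φ x ^ 2) x := by
    intro x hx
    have h1 := (hsφ x).1.hasDerivAt
    have h2 := (hsφ x).2.hasDerivAt
    have h3 := (hsψ x).1.hasDerivAt
    have h4 := (hsψ x).2.hasDerivAt
    have hD := (h3.mul h2).sub (h1.mul h4)
    convert hD using 1
    · rfl
    · rfl
    have e1 := hodeφ x (le_of_lt hx)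
    have e2 := hodeψ x (le_of_lt hx)
    linear_combination ψ x * e1 - φ x * e2
  have hcont : ContinuousWithinAt W (Set.Ici 0) 0 :=
    (((hsψ 0).1.continuousAt.mul (hsφ 0).2.continuousAt).sub
      ((hsφ 0).1.continuousAt.mul (hsψ 0).2.continuousAt)).continuousWithinAt
  have hint' : IntegrableOn (fun x : ℝ => c * φ x ^ 2) (Set.Ioi 0) := hint.const_mul c
  have key := integral_Ioi_of_hasDerivAt_of_tendsto hcont hder hint' hwron
  have hW0 : W 0 = 0 := by simp [hW, h0φ, h0ψ]
  rw [hW0, sub_zero, MeasureTheory.integral_const_mul] at key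
  exact (mul_eq_zero.mp key).resolve_left hc
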